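/- arXiv:2206.06726 — 3 statements merged into one kernel-verified Lean document; each statement's English description precedes it below -/
import Mathlib

section
/- Let 2<α<3, let h ∈ C([0,1]), let k ∈ C¹([0,1]) with k(0)=0, and let η₁, η₂ ∈ C([0,1]). Suppose y ∈ C³([0,1]) satisfies the fractional boundary value problem: ᶜDᵅy(t) = h(t) + ᶜD^{α−2}k(t) for t ∈ (0,1), together with y''(0)=0, y(0)+y'(0)=∫₀¹ η₁(s)ds and y(1)+y'(1)=∫₀¹ η₂(s)ds. Then for every t ∈ [0,1], y(t) = ∫₀¹ G(t,s)h(s)ds + ∫₀¹ H(t,s)k(s)ds + (2−t)∫₀¹ η₁(s)ds + (t−1)∫₀¹ η₂(s)ds. -/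
open MeasureTheory Set intervalIntegral

/-- Green function `G` associated to the fractional BVP, `2 < α < 3`. -/
noncomputable def greenG (α t s : ℝ) : ℝ :=
  if s ≤ t then
    ((t - s) ^ (α - 1) + (1 - t) * (1 - s) ^ (α - 1)) / Real.Gamma α
      + (1 - t) * (1 - s) ^ (α - 2) / Real.Gamma (α - 1)
  else
    (1 - t) * (1 - s) ^ (α - 1) / Real.Gamma α
      + (1 - t) * (1 - s) ^ (α - 2) / Real.Gamma (α - 1)

/-- Kernel `H` associated to the fractional BVP. -/
noncomputable def kernelH (t s : ℝ) : ℝ :=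
  if s ≤ t then (t - s) + (1 - t) * (2 - s) else (1 - t) * (2 - s)


lemma real_beta {a b : ℝ} (ha : 0 < a) (hb : 0 < b) :
    ∫ x in (0:ℝ)..1, x ^ (a-1) * (1-x) ^ (b-1) =
      Real.Gamma a * Real.Gamma b / Real.Gamma (a+b) := by
  have hG : Real.Gamma (a+b) ≠ 0 :=
    Real.Gamma_ne_zero fun m => by
      have : (0:ℝ) ≤ m := m.cast_nonneg
      exact (by linarith : -(m:ℝ) < a + b).ne'
  have key : Complex.Gamma a * Complex.Gamma b
      = Complex.Gamma (a+b) * Complex.betaIntegral a b := by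
    have := Complex.Gamma_mul_Gamma_eq_betaIntegral (s := (a:ℂ)) (t := (b:ℂ))
      (by simpa using ha) (by simpa using hb)
    simpa using this
  have hbeta : Complex.betaIntegral a b
      = ((∫ x in (0:ℝ)..1, x ^ (a-1) * (1-x) ^ (b-1) : ℝ) : ℂ) := by
    rw [Complex.betaIntegral, ← intervalIntegral.integral_ofReal]
    refine intervalIntegral.integral_congr fun x hx => ?_
    rw [uIcc_of_le (by norm_num)] at hx
    have h1 := Complex.ofReal_cpow hx.1 (a-1)
    have h2 := Complex.ofReal_cpow (by linarith [hx.2] : (0:ℝ) ≤ 1 - x) (b-1)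
    push_cast at h1 h2
    rw [Complex.ofReal_mul, ← h1, ← h2]
  rw [hbeta] at key
  have : Real.Gamma a * Real.Gamma b
      = Real.Gamma (a+b) * ∫ x in (0:ℝ)..1, x ^ (a-1) * (1-x) ^ (b-1) := by
    rw [← Complex.ofReal_add, Complex.Gamma_ofReal, Complex.Gamma_ofReal,
      Complex.Gamma_ofReal] at key
    exact_mod_cast key
  field_simp
  linarith [this]

lemma beta_scaled {p q u v : ℝ} (hp : 0 < p) (hq : 0 < q) (huv : u < v) :
    ∫ s in u..v, (v-s) ^ (p-1) * (s-u) ^ (q-1)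
      = (v-u) ^ (p+q-1) * (Real.Gamma p * Real.Gamma q / Real.Gamma (p+q)) := by
  have hc : (0:ℝ) < v - u := by linarith
  set F : ℝ → ℝ := fun s => (v-s) ^ (p-1) * (s-u) ^ (q-1) with hF
  have h2 : ∫ x in (0:ℝ)..1, F ((v-u) * x + u)
      = (v-u)⁻¹ • ∫ s in u..v, F s := by
    rw [intervalIntegral.integral_comp_mul_add F hc.ne' u]
    norm_num
  have h3 : ∫ x in (0:ℝ)..1, F ((v-u) * x + u)
      = (v-u)^(p-1) * (v-u)^(q-1) * ∫ x in (0:ℝ)..1, x ^ (q-1) * (1-x) ^ (p-1) := by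
    rw [← intervalIntegral.integral_const_mul]
    refine intervalIntegral.integral_congr fun x hx => ?_
    rw [uIcc_of_le (by norm_num)] at hx
    have hx0 : 0 ≤ x := hx.1
    have hx1 : 0 ≤ 1 - x := by linarith [hx.2]
    simp only [hF]
    have e1 : v - ((v-u) * x + u) = (v-u) * (1-x) := by ring
    have e2 : (v-u) * x + u - u = (v-u) * x := by ring
    rw [e1, e2, Real.mul_rpow hc.le hx1, Real.mul_rpow hc.le hx0]
    ring
  have h4 : ∫ x in (0:ℝ)..1, x ^ (q-1) * (1-x) ^ (p-1)
      = Real.Gamma q * Real.Gamma p / Real.Gamma (q+p) := real_beta hq hp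
  have h5 : (v-u) * ((v-u)^(p-1) * (v-u)^(q-1)) = (v-u)^(p+q-1) := by
    rw [← Real.rpow_add hc (p-1) (q-1)]
    nth_rewrite 1 [← Real.rpow_one (v-u)]
    rw [← Real.rpow_add hc]
    ring_nf
  have h6 := h2.symm.trans h3
  rw [smul_eq_mul] at h6
  have h7 : ∫ s in u..v, F s
      = (v-u) * ((v-u)^(p-1) * (v-u)^(q-1) * ∫ x in (0:ℝ)..1, x ^ (q-1) * (1-x) ^ (p-1)) := by
    field_simp at h6 ⊢
    linarith [h6]
  rw [h7, h4, add_comm q p, ← mul_assoc, h5]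
  ring

lemma cont_rpow_comp {β : ℝ} (hβ : 0 ≤ β) {g : ℝ → ℝ} (hg : Continuous g) :
    Continuous fun s => g s ^ β := by
  rw [continuous_iff_continuousAt]
  exact fun x => (Real.continuousAt_rpow_const _ _ (Or.inr hβ)).comp hg.continuousAt

lemma ker_II {β : ℝ} (hβ : -1 < β) (s a b : ℝ) :
    IntervalIntegrable (fun u => (s - u) ^ β) volume a b := by
  have := (intervalIntegrable_rpow' (a := s - a) (b := s - b) (r := β) hβ).comp_sub_left s
  simpa using this

lemma ker_II' {β : ℝ} (hβ : -1 < β) (u a b : ℝ) :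
    IntervalIntegrable (fun x => (x - u) ^ β) volume a b := by
  have := (intervalIntegrable_rpow' (a := a - u) (b := b - u) (r := β) hβ).comp_sub_right u
  simpa using this

lemma ker_int {β : ℝ} (hβ : -1 < β) {s : ℝ} (hs : 0 ≤ s) :
    ∫ u in (0:ℝ)..s, (s - u) ^ β = s ^ (β+1) / (β+1) := by
  rw [intervalIntegral.integral_comp_sub_left (fun x => x ^ β) s]
  simp only [sub_zero, sub_self]
  rw [integral_rpow (Or.inl hβ), Real.zero_rpow (by linarith)]
  ring

lemma greenG_eq {α : ℝ} (hα : 1 < α) (t s : ℝ) :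
    greenG α t s = (max (t-s) 0) ^ (α-1) / Real.Gamma α
      + (1-t) * (1-s) ^ (α-1) / Real.Gamma α
      + (1-t) * (1-s) ^ (α-2) / Real.Gamma (α-1) := by
  unfold greenG
  rcases le_or_gt s t with hst | hst
  · rw [if_pos hst, max_eq_left (by linarith)]
    ring
  · rw [if_neg (not_le.mpr hst), max_eq_right (by linarith), Real.zero_rpow (by linarith)]
    ring

lemma kernelH_eq (t s : ℝ) :
    kernelH t s = max (t-s) 0 + (1-t) * (2-s) := by
  unfold kernelH
  rcases le_or_gt s t with hst | hst
  · rw [if_pos hst, max_eq_left (by linarith)]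
  · rw [if_neg (not_le.mpr hst), max_eq_right (by linarith), zero_add]

lemma maxker_zero {β s u : ℝ} (hβ0 : β ≠ 0) (hsu : s ≤ u) : (max (s-u) 0 : ℝ)^β = 0 := by
  rw [max_eq_right (by linarith), Real.zero_rpow hβ0]


-- splitting lemma
lemma max_split {g : ℝ → ℝ} (hg : Continuous g) {t c : ℝ} (htc : t ≤ c) {β : ℝ}
    (hβ : 0 < β) {a : ℝ} (hat : a ≤ t) :
    ∫ s in a..c, (max (t-s) 0) ^ β * g s = ∫ s in a..t, (t-s) ^ β * g s := by
  have hcont : Continuous fun s => (max (t-s) 0) ^ β * g s :=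
    (cont_rpow_comp hβ.le ((continuous_const.sub continuous_id).max continuous_const)).mul hg
  have h1 := intervalIntegral.integral_add_adjacent_intervals
    (hcont.intervalIntegrable (μ := volume) a t) (hcont.intervalIntegrable (μ := volume) t c)
  have h2 : ∫ s in t..c, (max (t-s) 0)^β * g s = 0 := by
    have : ∫ s in t..c, (max (t-s) 0)^β * g s = ∫ s in t..c, (0:ℝ) := by
      refine intervalIntegral.integral_congr fun s hs => ?_
      rw [uIcc_of_le htc] at hs
      rw [maxker_zero hβ.ne' hs.1, zero_mul]
    rw [this, intervalIntegral.integral_zero]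
  have h3 : ∫ s in a..t, (max (t-s) 0)^β * g s = ∫ s in a..t, (t-s)^β * g s := by
    refine intervalIntegral.integral_congr fun s hs => ?_
    rw [uIcc_of_le hat] at hs
    rw [max_eq_left (by linarith [hs.2])]
  rw [← h1, h2, add_zero, h3]

lemma maxker_integrableOn {β : ℝ} (hβ : -1 < β) (hβ0 : β ≠ 0) {s : ℝ} (hs : s ≤ 1)
    {g : ℝ → ℝ} (hg : Continuous g) :
    IntegrableOn (fun u => (max (s - u) 0) ^ β * g u) (Ioo 0 1) volume := by
  rcases le_or_gt s 0 with h | h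
  · refine (integrableOn_zero (s := Ioo 0 1)).congr_fun (fun x hx => ?_) measurableSet_Ioo
    rw [maxker_zero hβ0 (by linarith [hx.1] : s ≤ x), zero_mul]
  · have h1 : IntegrableOn (fun u => (max (s - u) 0) ^ β * g u) (Ioo 0 s) volume := by
      have hbase : IntegrableOn (fun u => (s - u) ^ β * g u) (Ioo 0 s) volume := by
        have := (ker_II hβ s 0 s).mul_continuousOn hg.continuousOn
        rw [intervalIntegrable_iff_integrableOn_Ioc_of_le h.le] at this
        exact this.mono_set Ioo_subset_Ioc_self
      refine hbase.congr_fun (fun x hx => ?_) measurableSet_Ioo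
      rw [max_eq_left (by linarith [hx.2] : (0:ℝ) ≤ s - x)]
    have h2 : IntegrableOn (fun u => (max (s - u) 0) ^ β * g u) (Ico s 1) volume := by
      refine (integrableOn_zero (s := Ico s 1)).congr_fun (fun x hx => ?_) measurableSet_Ico
      rw [maxker_zero hβ0 hx.1, zero_mul]
    exact (h1.union h2).mono_set (fun x hx => by
      rcases lt_or_ge x s with hxs | hxs
      · exact Or.inl ⟨hx.1, hxs⟩
      · exact Or.inr ⟨hxs, hx.2⟩)


section ftc
variable {y k : ℝ → ℝ}

lemma deriv_fact1 (hy : ContDiff ℝ 3 y) (x : ℝ) : HasDerivAt y (deriv y x) x :=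
  ((hy.differentiable (by norm_num)) x).hasDerivAt

lemma deriv_fact2 (hy : ContDiff ℝ 3 y) (x : ℝ) :
    HasDerivAt (deriv y) (iteratedDeriv 2 y x) x := by
  have hd : Differentiable ℝ (iteratedDeriv 1 y) :=
    hy.differentiable_iteratedDeriv 1 (by norm_num)
  rw [iteratedDeriv_one] at hd
  have := (hd x).hasDerivAt
  rwa [show iteratedDeriv 2 y x = deriv (deriv y) x by
    rw [iteratedDeriv_succ, iteratedDeriv_one]] 

lemma deriv_fact3 (hy : ContDiff ℝ 3 y) (x : ℝ) :
    HasDerivAt (iteratedDeriv 2 y) (iteratedDeriv 3 y x) x := by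
  have hd : Differentiable ℝ (iteratedDeriv 2 y) :=
    hy.differentiable_iteratedDeriv 2 (by norm_num)
  have := (hd x).hasDerivAt
  rwa [show iteratedDeriv 3 y x = deriv (iteratedDeriv 2 y) x by
    rw [iteratedDeriv_succ]]

lemma ftcA (hy : ContDiff ℝ 3 y) (t : ℝ) :
    ∫ u in (0:ℝ)..t, (t-u)^2/2 * iteratedDeriv 3 y u
      = y t - y 0 - deriv y 0 * t - iteratedDeriv 2 y 0 * t^2/2 := by
  have hcont3 : Continuous (iteratedDeriv 3 y) := hy.continuous_iteratedDeriv 3 (by norm_num)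
  have hF : ∀ x : ℝ, HasDerivAt
      (fun u => (t-u)^2/2 * iteratedDeriv 2 y u + ((t-u) * deriv y u + y u))
      ((t-x)^2/2 * iteratedDeriv 3 y x) x := by
    intro x
    have h1 : HasDerivAt (fun u : ℝ => t - u) (-1) x := (hasDerivAt_id x).const_sub t
    have hP : HasDerivAt (fun u : ℝ => (t-u)^2/2) (-(t-x)) x := by
      have := (h1.pow 2).div_const 2
      refine this.congr_deriv ?_
      push_cast
      ring
    have := ((hP.mul (deriv_fact3 hy x)).add
      ((h1.mul (deriv_fact2 hy x)).add (deriv_fact1 hy x)))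
    refine this.congr_deriv ?_
    ring
  have c1 : Continuous fun x : ℝ => (t-x)^2/2 * iteratedDeriv 3 y x := by
    have : Continuous fun x : ℝ => (t-x)^2/2 := by fun_prop
    exact this.mul hcont3
  have key := intervalIntegral.integral_eq_sub_of_hasDerivAt
    (f := fun u => (t-u)^2/2 * iteratedDeriv 2 y u + ((t-u) * deriv y u + y u))
    (fun x _ => hF x)
    (c1.intervalIntegrable (μ := volume) 0 t)
  rw [key]
  ring_nf

lemma ftcB (hk : ContDiff ℝ 1 k) (hk0 : k 0 = 0) (t : ℝ) :
    ∫ u in (0:ℝ)..t, (t-u)^2/2 * deriv k u = ∫ u in (0:ℝ)..t, (t-u) * k u := by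
  have hk' : Continuous (deriv k) := hk.continuous_deriv le_rfl
  have hkc : Continuous k := hk.continuous
  have hF : ∀ x : ℝ, HasDerivAt (fun u => (t-u)^2/2 * k u)
      ((t-x)^2/2 * deriv k x - (t-x) * k x) x := by
    intro x
    have h1 : HasDerivAt (fun u : ℝ => t - u) (-1) x := (hasDerivAt_id x).const_sub t
    have hP : HasDerivAt (fun u : ℝ => (t-u)^2/2) (-(t-x)) x := by
      have := (h1.pow 2).div_const 2
      refine this.congr_deriv ?_
      push_cast; ring
    have hkd : HasDerivAt k (deriv k x) x := ((hk.differentiable (by norm_num)) x).hasDerivAt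
    have := hP.mul hkd
    refine this.congr_deriv ?_
    ring
  have c1 : Continuous fun u : ℝ => (t-u)^2/2 * deriv k u := by fun_prop
  have c2 : Continuous fun u : ℝ => (t-u) * k u := by fun_prop
  have key := intervalIntegral.integral_eq_sub_of_hasDerivAt
    (f := fun u => (t-u)^2/2 * k u) (fun x _ => hF x)
    ((c1.sub c2).intervalIntegrable (μ := volume) 0 t)
  have hsub := intervalIntegral.integral_sub (μ := volume)
    (c1.intervalIntegrable 0 t) (c2.intervalIntegrable 0 t)
  have e : (fun u => (t-u)^2/2 * k u) t - (fun u => (t-u)^2/2 * k u) 0 = 0 := by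
    simp [hk0]
  rw [hsub, e] at key
  linarith [key]

lemma ftcC (hy : ContDiff ℝ 3 y) :
    ∫ u in (0:ℝ)..1, ((1-u)^2/2 + (1-u)) * iteratedDeriv 3 y u
      = y 1 + deriv y 1 - (y 0 + 2 * deriv y 0 + 3/2 * iteratedDeriv 2 y 0) := by
  have hF : ∀ x : ℝ, HasDerivAt
      (fun u => ((1-u)^2/2 + (1-u)) * iteratedDeriv 2 y u - ((u-2) * deriv y u - y u))
      (((1-x)^2/2 + (1-x)) * iteratedDeriv 3 y x) x := by
    intro x
    have h1 : HasDerivAt (fun u : ℝ => 1 - u) (-1) x := (hasDerivAt_id x).const_sub 1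
    have hP : HasDerivAt (fun u : ℝ => (1-u)^2/2 + (1-u)) (x - 2) x := by
      have := ((h1.pow 2).div_const 2).add h1
      refine this.congr_deriv ?_
      push_cast; ring
    have h2 : HasDerivAt (fun u : ℝ => u - 2) 1 x := (hasDerivAt_id x).sub_const 2
    have := (hP.mul (deriv_fact3 hy x)).sub
      ((h2.mul (deriv_fact2 hy x)).sub (deriv_fact1 hy x))
    refine this.congr_deriv ?_
    ring
  have hcont3 : Continuous (iteratedDeriv 3 y) := hy.continuous_iteratedDeriv 3 (by norm_num)
  have c1 : Continuous fun x : ℝ => ((1-x)^2/2 + (1-x)) * iteratedDeriv 3 y x := by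
    have : Continuous fun x : ℝ => (1-x)^2/2 + (1-x) := by fun_prop
    exact this.mul hcont3
  have key := intervalIntegral.integral_eq_sub_of_hasDerivAt (fun x _ => hF x)
    (c1.intervalIntegrable (μ := volume) 0 1)
  rw [key]
  ring_nf

lemma ftcD (hk : ContDiff ℝ 1 k) (hk0 : k 0 = 0) :
    ∫ u in (0:ℝ)..1, ((1-u)^2/2 + (1-u)) * deriv k u
      = ∫ u in (0:ℝ)..1, (2-u) * k u := by
  have hk' : Continuous (deriv k) := hk.continuous_deriv le_rfl
  have hkc : Continuous k := hk.continuous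
  have hF : ∀ x : ℝ, HasDerivAt (fun u => ((1-u)^2/2 + (1-u)) * k u)
      (((1-x)^2/2 + (1-x)) * deriv k x - (2-x) * k x) x := by
    intro x
    have h1 : HasDerivAt (fun u : ℝ => 1 - u) (-1) x := (hasDerivAt_id x).const_sub 1
    have hP : HasDerivAt (fun u : ℝ => (1-u)^2/2 + (1-u)) (x - 2) x := by
      have := ((h1.pow 2).div_const 2).add h1
      refine this.congr_deriv ?_
      push_cast; ring
    have hkd : HasDerivAt k (deriv k x) x := ((hk.differentiable (by norm_num)) x).hasDerivAt
    have := hP.mul hkd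
    refine this.congr_deriv ?_
    ring
  have c1 : Continuous fun u : ℝ => ((1-u)^2/2 + (1-u)) * deriv k u := by fun_prop
  have c2 : Continuous fun u : ℝ => (2-u) * k u := by fun_prop
  have key := intervalIntegral.integral_eq_sub_of_hasDerivAt (fun x _ => hF x)
    ((c1.sub c2).intervalIntegrable (μ := volume) 0 1)
  have hsub := intervalIntegral.integral_sub (μ := volume)
    (c1.intervalIntegrable 0 1) (c2.intervalIntegrable 0 1)
  have e : (fun u => ((1-u)^2/2 + (1-u)) * k u) 1 - (fun u => ((1-u)^2/2 + (1-u)) * k u) 0 = 0 := by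
    simp [hk0]
  rw [hsub, e] at key
  linarith [key]

end ftc


lemma Gamma_three : Real.Gamma 3 = 2 := by
  rw [show (3:ℝ) = 2 + 1 by norm_num, Real.Gamma_add_one (by norm_num), Real.Gamma_two]
  norm_num

lemma kernel_eval {α t u : ℝ} (hα1 : 2 < α) (hα2 : α < 3) (ht1 : t ≤ 1)
    (hu1 : u < 1) :
    ∫ s in u..(1:ℝ), greenG α t s * (s-u)^(2-α)
      = Real.Gamma (3-α) * ((max (t-u) 0)^(2:ℝ)/2 + (1-t)*((1-u)^(2:ℝ)/2 + (1-u))) := by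
  have he1 : (-1:ℝ) < 2 - α := by linarith
  have he2 : (0:ℝ) < α - 1 := by linarith
  have hne2 : (2:ℝ) - α ≠ 0 := by intro e; linarith [sub_eq_zero.mp e]
  have hΓα : 0 < Real.Gamma α := Real.Gamma_pos_of_pos (by linarith)
  have hΓα1 : 0 < Real.Gamma (α-1) := Real.Gamma_pos_of_pos (by linarith)
  set X : ℝ → ℝ := fun s => (max (t-s) 0)^(α-1) * (s-u)^(2-α) / Real.Gamma α with hX
  set Y : ℝ → ℝ := fun s => ((1-t)/Real.Gamma α) * ((1-s)^(α-1) * (s-u)^(2-α)) with hY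
  set Z : ℝ → ℝ := fun s => ((1-t)/Real.Gamma (α-1)) * ((1-s)^(α-2) * (s-u)^(2-α)) with hZ
  have contMax : Continuous fun s : ℝ => (max (t-s) 0)^(α-1) :=
    cont_rpow_comp he2.le ((continuous_const.sub continuous_id).max continuous_const)
  have cont1 : Continuous fun s : ℝ => (1-s)^(α-1) :=
    cont_rpow_comp he2.le (continuous_const.sub continuous_id)
  have cont2 : Continuous fun s : ℝ => (1-s)^(α-2) :=
    cont_rpow_comp (by linarith) (continuous_const.sub continuous_id)
  have IIX : ∀ a b : ℝ, IntervalIntegrable X volume a b := fun a b =>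
    ((ker_II' he1 u a b).continuousOn_mul contMax.continuousOn).div_const _
  have IIY : ∀ a b : ℝ, IntervalIntegrable Y volume a b := fun a b =>
    ((ker_II' he1 u a b).continuousOn_mul cont1.continuousOn).const_mul _
  have IIZ : ∀ a b : ℝ, IntervalIntegrable Z volume a b := fun a b =>
    ((ker_II' he1 u a b).continuousOn_mul cont2.continuousOn).const_mul _
  have e0 : ∫ s in u..(1:ℝ), greenG α t s * (s-u)^(2-α)
      = ∫ s in u..(1:ℝ), (X s + Y s + Z s) := by
    refine intervalIntegral.integral_congr fun s _ => ?_
    rw [greenG_eq (by linarith) t s]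
    simp only [hX, hY, hZ]
    ring
  have eY : ∫ s in u..(1:ℝ), Y s
      = ((1-t)/Real.Gamma α) * ((1-u)^(2:ℝ) * (Real.Gamma α * Real.Gamma (3-α) / 2)) := by
    simp only [hY]
    rw [intervalIntegral.integral_const_mul]
    have hbY := beta_scaled (p := α) (q := 3-α) (by linarith) (by linarith) hu1
    rw [show (3:ℝ)-α-1 = 2-α by ring] at hbY
    rw [show α+(3-α)-1 = (2:ℝ) by ring] at hbY
    rw [show α+(3-α) = (3:ℝ) by ring] at hbY
    rw [hbY, Gamma_three]
  have eZ : ∫ s in u..(1:ℝ), Z s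
      = ((1-t)/Real.Gamma (α-1)) * ((1-u) * (Real.Gamma (α-1) * Real.Gamma (3-α))) := by
    simp only [hZ]
    rw [intervalIntegral.integral_const_mul]
    have hbZ := beta_scaled (p := α-1) (q := 3-α) (by linarith) (by linarith) hu1
    rw [show α-1-1 = α-2 by ring] at hbZ
    rw [show (3:ℝ)-α-1 = 2-α by ring] at hbZ
    rw [show α-1+(3-α)-1 = (1:ℝ) by ring] at hbZ
    rw [show α-1+(3-α) = (2:ℝ) by ring] at hbZ
    rw [hbZ, Real.rpow_one, Real.Gamma_two]
    ring
  have eX : ∫ s in u..(1:ℝ), X s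
      = (max (t-u) 0)^(2:ℝ) * (Real.Gamma (3-α) / 2) := by
    rcases le_or_gt t u with htu | htu
    · have h0 : ∫ s in u..(1:ℝ), X s = ∫ s in u..(1:ℝ), (0:ℝ) := by
        refine intervalIntegral.integral_congr fun s hs => ?_
        rw [uIcc_of_le hu1.le] at hs
        simp only [hX]
        rcases eq_or_lt_of_le hs.1 with he | hlt
        · rw [← he, sub_self, Real.zero_rpow hne2, mul_zero, zero_div]
        · rw [max_eq_right (by linarith), Real.zero_rpow he2.ne', zero_mul, zero_div]
      rw [h0, intervalIntegral.integral_zero, max_eq_right (by linarith : t - u ≤ 0),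
        Real.zero_rpow (by norm_num : (2:ℝ) ≠ 0), zero_mul]
    · have hsplit := intervalIntegral.integral_add_adjacent_intervals (IIX u t) (IIX t 1)
      have hX2 : ∫ s in t..(1:ℝ), X s = 0 := by
        have : ∫ s in t..(1:ℝ), X s = ∫ s in t..(1:ℝ), (0:ℝ) := by
          refine intervalIntegral.integral_congr fun s hs => ?_
          rw [uIcc_of_le ht1] at hs
          simp only [hX]
          rw [max_eq_right (by linarith [hs.1]), Real.zero_rpow he2.ne', zero_mul, zero_div]
        rw [this, intervalIntegral.integral_zero]
      have hX1 : ∫ s in u..t, X s = (∫ s in u..t, (t-s)^(α-1) * (s-u)^(2-α)) / Real.Gamma α := by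
        rw [← intervalIntegral.integral_div]
        refine intervalIntegral.integral_congr fun s hs => ?_
        rw [uIcc_of_le htu.le] at hs
        simp only [hX]
        rw [max_eq_left (by linarith [hs.2])]
      have hbX := beta_scaled (p := α) (q := 3-α) (by linarith) (by linarith) htu
      rw [show (3:ℝ)-α-1 = 2-α by ring] at hbX
      rw [show α+(3-α)-1 = (2:ℝ) by ring] at hbX
      rw [show α+(3-α) = (3:ℝ) by ring] at hbX
      rw [← hsplit, hX2, add_zero, hX1, hbX, Gamma_three,
        max_eq_left (by linarith : (0:ℝ) ≤ t - u)]
      field_simp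
  rw [e0, intervalIntegral.integral_add ((IIX u 1).add (IIY u 1)) (IIZ u 1),
    intervalIntegral.integral_add (IIX u 1) (IIY u 1), eX, eY, eZ]
  field_simp
  ring


lemma green_fubini {α t : ℝ} (hα1 : 2 < α) (hα2 : α < 3) (ht0 : 0 ≤ t) (ht1 : t ≤ 1)
    {f : ℝ → ℝ} (hfc : Continuous f) :
    ∫ s in Ioo (0:ℝ) 1, greenG α t s * ∫ u in (0:ℝ)..s, (s-u)^(2-α) * f u
      = Real.Gamma (3-α) * ((∫ u in (0:ℝ)..t, (t-u)^2/2 * f u)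
          + (1-t) * ∫ u in (0:ℝ)..1, ((1-u)^2/2 + (1-u)) * f u) := by
  have he1 : (-1:ℝ) < 2 - α := by linarith
  have he2 : (0:ℝ) < α - 1 := by linarith
  have hne2 : (2:ℝ) - α ≠ 0 := by intro e; linarith [sub_eq_zero.mp e]
  have hΓα : 0 < Real.Gamma α := Real.Gamma_pos_of_pos (by linarith)
  have hΓα1 : 0 < Real.Gamma (α-1) := Real.Gamma_pos_of_pos (by linarith)
  set μ : Measure ℝ := volume.restrict (Ioo 0 1) with hμ
  set W : ℝ → ℝ → ℝ := fun s u => greenG α t s * ((max (s-u) 0)^(2-α) * f u) with hW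
  -- measurability
  have hGm : Measurable (greenG α t) := by
    unfold greenG
    exact Measurable.ite measurableSet_Iic (by fun_prop) (by fun_prop)
  have hWm : Measurable (Function.uncurry W) := by
    apply Measurable.mul (hGm.comp measurable_fst)
    exact Measurable.mul (by fun_prop) (hfc.measurable.comp measurable_snd)
  -- bounds
  obtain ⟨Mf, hMf⟩ := isCompact_Icc.exists_bound_of_continuousOn
    (hfc.continuousOn (s := Icc (0:ℝ) 1))
  have hMf0 : 0 ≤ Mf := le_trans (norm_nonneg _) (hMf 0 (by constructor <;> norm_num))
  set MG : ℝ := 1/Real.Gamma α + 1/Real.Gamma α + 1/Real.Gamma (α-1) with hMG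
  have hMG0 : 0 ≤ MG := by positivity
  have hGb : ∀ s ∈ Ioo (0:ℝ) 1, |greenG α t s| ≤ MG := by
    intro s hs
    obtain ⟨hs0, hs1⟩ := hs
    rw [greenG_eq (by linarith) t s]
    have m1 : 0 ≤ max (t-s) 0 := le_max_right _ _
    have m2 : max (t-s) 0 ≤ 1 := max_le (by linarith) zero_le_one
    have b1 : 0 ≤ (max (t-s) 0)^(α-1) := Real.rpow_nonneg m1 _
    have b1' : (max (t-s) 0)^(α-1) ≤ 1 := Real.rpow_le_one m1 m2 he2.le
    have b2 : 0 ≤ (1-s)^(α-1) := Real.rpow_nonneg (by linarith) _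
    have b2' : (1-s)^(α-1) ≤ 1 := Real.rpow_le_one (by linarith) (by linarith) he2.le
    have b3 : 0 ≤ (1-s)^(α-2) := Real.rpow_nonneg (by linarith) _
    have b3' : (1-s)^(α-2) ≤ 1 := Real.rpow_le_one (by linarith) (by linarith) (by linarith)
    have ht' : 0 ≤ 1 - t := by linarith
    have ht'' : 1 - t ≤ 1 := by linarith
    rw [abs_of_nonneg (by positivity), hMG]
    gcongr <;> nlinarith [b1, b1', b2, b2', b3, b3', ht', ht'']
  -- per-s integrability in u
  have hIker : ∀ s : ℝ, 0 < s → s ≤ 1 → IntegrableOn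
      (fun u => (max (s-u) 0)^(2-α) * f u) (Ioo 0 1) volume := fun s _ hs1 =>
    maxker_integrableOn he1 hne2 hs1 hfc
  have hInt1 : ∀ s ∈ Ioo (0:ℝ) 1, Integrable (fun u => W s u) μ := by
    intro s hs
    exact ((hIker s hs.1 hs.2.le).const_mul (greenG α t s))
  -- the dominating constant
  set C0 : ℝ := MG * Mf * (1/(3-α)) with hC0
  -- norm-integral bound
  have hbnd : ∀ s ∈ Ioo (0:ℝ) 1, (∫ u, ‖W s u‖ ∂μ) ≤ C0 := by
    intro s hs
    obtain ⟨hs0, hs1⟩ := hs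
    have hdom : IntegrableOn (fun u => (max (s-u) 0)^(2-α) * (MG * Mf)) (Ioo 0 1) volume :=
      maxker_integrableOn he1 hne2 hs1.le continuous_const
    have hle : ∀ u ∈ Ioo (0:ℝ) 1, ‖W s u‖ ≤ (max (s-u) 0)^(2-α) * (MG * Mf) := by
      intro u hu
      have m1 : (0:ℝ) ≤ (max (s-u) 0)^(2-α) := Real.rpow_nonneg (le_max_right _ _) _
      have : ‖W s u‖ = |greenG α t s| * ((max (s-u) 0)^(2-α) * |f u|) := by
        simp only [hW, Real.norm_eq_abs, abs_mul, abs_of_nonneg m1]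
      rw [this]
      have h1 := hGb s ⟨hs0, hs1⟩
      have h2 : |f u| ≤ Mf := by
        have := hMf u ⟨hu.1.le, hu.2.le⟩
        rwa [Real.norm_eq_abs] at this
      calc |greenG α t s| * ((max (s-u) 0)^(2-α) * |f u|)
          ≤ MG * ((max (s-u) 0)^(2-α) * Mf) :=
            mul_le_mul h1 (mul_le_mul_of_nonneg_left h2 m1) (by positivity) hMG0
        _ = (max (s-u) 0)^(2-α) * (MG * Mf) := by ring
    have step1 : (∫ u, ‖W s u‖ ∂μ) ≤ ∫ u in Ioo (0:ℝ) 1, (max (s-u) 0)^(2-α) * (MG * Mf) := by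
      refine integral_mono_of_nonneg (Filter.Eventually.of_forall fun u => norm_nonneg _)
        hdom ?_
      rw [hμ, Filter.EventuallyLE, ae_restrict_iff' measurableSet_Ioo]
      exact Filter.Eventually.of_forall fun u hu => hle u hu
    refine le_trans step1 ?_
    -- compute the dominating integral
    have e1 : ∫ u in Ioo (0:ℝ) 1, (max (s-u) 0)^(2-α) * (MG * Mf)
        = ∫ u in Ioo (0:ℝ) s, (max (s-u) 0)^(2-α) * (MG * Mf) := by
      refine setIntegral_eq_of_subset_of_forall_diff_eq_zero measurableSet_Ioo
        (Ioo_subset_Ioo le_rfl hs1.le) fun x hx => ?_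
      have hsx : s ≤ x := by
        by_contra hcon
        push_neg at hcon
        exact hx.2 ⟨hx.1.1, hcon⟩
      rw [maxker_zero hne2 hsx, zero_mul]
    have e2 : ∫ u in Ioo (0:ℝ) s, (max (s-u) 0)^(2-α) * (MG * Mf)
        = ∫ u in Ioo (0:ℝ) s, (s-u)^(2-α) * (MG * Mf) := by
      refine setIntegral_congr_fun measurableSet_Ioo fun x hx => ?_
      rw [max_eq_left (by linarith [hx.2] : (0:ℝ) ≤ s - x)]
    have e3 : ∫ u in Ioo (0:ℝ) s, (s-u)^(2-α) * (MG * Mf)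
        = (∫ u in (0:ℝ)..s, (s-u)^(2-α)) * (MG * Mf) := by
      rw [intervalIntegral.integral_of_le hs0.le, integral_Ioc_eq_integral_Ioo,
        ← MeasureTheory.integral_mul_const]
    rw [e1, e2, e3, ker_int he1 hs0.le]
    have e4 : s ^ (2-α+1) ≤ 1 := Real.rpow_le_one hs0.le hs1.le (by linarith)
    have e5 : (0:ℝ) < 2-α+1 := by linarith
    have key : s ^ (2-α+1) / (2-α+1) ≤ 1/(3-α) := by
      rw [show (3:ℝ)-α = 2-α+1 by ring, div_le_div_iff₀ e5 e5]
      nlinarith [e4, e5]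
    calc s ^ (2-α+1) / (2-α+1) * (MG * Mf) ≤ 1/(3-α) * (MG * Mf) :=
          mul_le_mul_of_nonneg_right key (mul_nonneg hMG0 hMf0)
      _ = C0 := by rw [hC0]; ring
  -- product integrability
  have hprod : Integrable (Function.uncurry W) (μ.prod μ) := by
    rw [integrable_prod_iff hWm.aestronglyMeasurable]
    constructor
    · rw [hμ, ae_restrict_iff' measurableSet_Ioo]
      exact Filter.Eventually.of_forall fun s hs => hInt1 s hs
    · refine Integrable.mono' (integrable_const C0)
        (hWm.norm.aestronglyMeasurable.integral_prod_right') ?_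
      rw [hμ, ae_restrict_iff' measurableSet_Ioo]
      refine Filter.Eventually.of_forall fun s hs => ?_
      rw [Real.norm_eq_abs, abs_of_nonneg (integral_nonneg fun u => norm_nonneg _)]
      exact hbnd s hs
  have hswap := MeasureTheory.integral_integral_swap (f := W) hprod
  have hlhs : ∫ s, (∫ u, W s u ∂μ) ∂μ
      = ∫ s in Ioo (0:ℝ) 1, greenG α t s * ∫ u in (0:ℝ)..s, (s-u)^(2-α) * f u := by
    rw [hμ]
    refine setIntegral_congr_fun measurableSet_Ioo fun s hs => ?_
    have e1 : ∫ u, W s u ∂μ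
        = greenG α t s * ∫ u in Ioo (0:ℝ) 1, ((max (s-u) 0)^(2-α) * f u) := by
      rw [hμ]; exact integral_const_mul _ _
    have e2 : ∫ u in Ioo (0:ℝ) 1, ((max (s-u) 0)^(2-α) * f u)
        = ∫ u in Ioo (0:ℝ) s, ((max (s-u) 0)^(2-α) * f u) :=
      setIntegral_eq_of_subset_of_forall_diff_eq_zero measurableSet_Ioo
        (Ioo_subset_Ioo le_rfl hs.2.le) (fun x hx => by
          have hsx : s ≤ x := by
            by_contra hcon; push_neg at hcon; exact hx.2 ⟨hx.1.1, hcon⟩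
          rw [maxker_zero hne2 hsx, zero_mul])
    have e3 : ∫ u in Ioo (0:ℝ) s, ((max (s-u) 0)^(2-α) * f u)
        = ∫ u in Ioo (0:ℝ) s, ((s-u)^(2-α) * f u) :=
      setIntegral_congr_fun measurableSet_Ioo fun x hx => by
        rw [max_eq_left (by linarith [hx.2] : (0:ℝ) ≤ s - x)]
    rw [intervalIntegral.integral_of_le hs.1.le, integral_Ioc_eq_integral_Ioo, e1, e2, e3]
  have hrhs : ∫ u, (∫ s, W s u ∂μ) ∂μ
      = ∫ u in Ioo (0:ℝ) 1, (Real.Gamma (3-α) *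
          ((max (t-u) 0)^(2:ℝ)/2 + (1-t)*((1-u)^(2:ℝ)/2 + (1-u))) * f u) := by
    rw [hμ]
    refine setIntegral_congr_fun measurableSet_Ioo fun u hu => ?_
    have e1 : ∫ s, W s u ∂μ = ∫ s in Ioo u 1, W s u := by
      rw [hμ]
      exact setIntegral_eq_of_subset_of_forall_diff_eq_zero measurableSet_Ioo
        (Ioo_subset_Ioo hu.1.le le_rfl) (fun x hx => by
          have hxu : x ≤ u := by
            by_contra hcon; push_neg at hcon; exact hx.2 ⟨hcon, hx.1.2⟩
          simp only [hW]
          rw [maxker_zero hne2 hxu, zero_mul, mul_zero])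
    have e2 : ∫ s in Ioo u 1, W s u
        = ∫ s in Ioo u 1, (greenG α t s * (s-u)^(2-α)) * f u :=
      setIntegral_congr_fun measurableSet_Ioo fun x hx => by
        simp only [hW]
        rw [max_eq_left (by linarith [hx.1] : (0:ℝ) ≤ x - u)]
        ring
    have e3 : ∫ s in Ioo u 1, (greenG α t s * (s-u)^(2-α)) * f u
        = (∫ s in u..(1:ℝ), greenG α t s * (s-u)^(2-α)) * f u := by
      rw [intervalIntegral.integral_of_le hu.2.le, integral_Ioc_eq_integral_Ioo,
        ← MeasureTheory.integral_mul_const]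
    rw [e1, e2, e3, kernel_eval hα1 hα2 ht1 hu.2]
  have cmax2 : Continuous fun u : ℝ => (max (t-u) 0)^(2:ℝ) :=
    cont_rpow_comp (by norm_num) ((continuous_const.sub continuous_id).max continuous_const)
  have c1u : Continuous fun u : ℝ => (1-u)^(2:ℝ) :=
    cont_rpow_comp (by norm_num) (continuous_const.sub continuous_id)
  have hrhs2 : ∫ u in Ioo (0:ℝ) 1, (Real.Gamma (3-α) *
        ((max (t-u) 0)^(2:ℝ)/2 + (1-t)*((1-u)^(2:ℝ)/2 + (1-u))) * f u)
      = Real.Gamma (3-α) * ((∫ u in (0:ℝ)..t, (t-u)^2/2 * f u)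
          + (1-t) * ∫ u in (0:ℝ)..1, ((1-u)^2/2 + (1-u)) * f u) := by
    rw [← integral_Ioc_eq_integral_Ioo,
      ← intervalIntegral.integral_of_le (by norm_num : (0:ℝ) ≤ 1)]
    have expand : ∀ u : ℝ, Real.Gamma (3-α) *
          ((max (t-u) 0)^(2:ℝ)/2 + (1-t)*((1-u)^(2:ℝ)/2 + (1-u))) * f u
        = Real.Gamma (3-α) * ((max (t-u) 0)^(2:ℝ) * (f u / 2)
            + (1-t)*(((1-u)^(2:ℝ)/2 + (1-u)) * f u)) := fun u => by ring
    rw [intervalIntegral.integral_congr (fun u _ => expand u),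
      intervalIntegral.integral_const_mul]
    have II1 : IntervalIntegrable (fun u => (max (t-u) 0)^(2:ℝ) * (f u / 2)) volume 0 1 :=
      (cmax2.mul (hfc.div_const 2)).intervalIntegrable (μ := volume) 0 1
    have II2 : IntervalIntegrable
        (fun u => (1-t) * (((1-u)^(2:ℝ)/2 + (1-u)) * f u)) volume 0 1 :=
      (continuous_const.mul ((((c1u.div_const 2).add
        (continuous_const.sub continuous_id))).mul hfc)).intervalIntegrable (μ := volume) 0 1
    rw [intervalIntegral.integral_add II1 II2, intervalIntegral.integral_const_mul]
    have m1 := max_split (g := fun u => f u / 2) (hfc.div_const 2) ht1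
      (by norm_num : (0:ℝ) < 2) (a := 0) ht0
    rw [m1]
    have cong1 : ∫ s in (0:ℝ)..t, (t-s)^(2:ℝ) * (f s / 2)
        = ∫ u in (0:ℝ)..t, (t-u)^2/2 * f u :=
      intervalIntegral.integral_congr fun s _ => by rw [Real.rpow_two]; ring
    have cong2 : ∫ u in (0:ℝ)..1, ((1-u)^(2:ℝ)/2 + (1-u)) * f u
        = ∫ u in (0:ℝ)..1, ((1-u)^2/2 + (1-u)) * f u :=
      intervalIntegral.integral_congr fun u _ => by rw [Real.rpow_two]
    rw [cong1, cong2]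
  calc ∫ s in Ioo (0:ℝ) 1, greenG α t s * ∫ u in (0:ℝ)..s, (s-u)^(2-α) * f u
      = ∫ s, (∫ u, W s u ∂μ) ∂μ := hlhs.symm
    _ = ∫ u, (∫ s, W s u ∂μ) ∂μ := hswap
    _ = ∫ u in Ioo (0:ℝ) 1, (Real.Gamma (3-α) *
          ((max (t-u) 0)^(2:ℝ)/2 + (1-t)*((1-u)^(2:ℝ)/2 + (1-u))) * f u) := hrhs
    _ = _ := hrhs2


/-- For `2 < α < 3` and a C³ function `y`, if `y` solves the linear fractional BVP
`ᶜDᵅy(t) = h(t) + ᶜD^{α−2}k(t)` on `(0,1)` with `y''(0) = 0`,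
`y(0) + y'(0) = ∫₀¹ η₁` and `y(1) + y'(1) = ∫₀¹ η₂`, then `y` is given by the
Green-function representation. -/
theorem linear_bvp_green_representation
    (α : ℝ) (hα1 : 2 < α) (hα2 : α < 3)
    (h k η₁ η₂ y : ℝ → ℝ)
    (hh : ContinuousOn h (Icc 0 1))
    (hk : ContDiff ℝ 1 k) (hk0 : k 0 = 0)
    (hη₁ : ContinuousOn η₁ (Icc 0 1)) (hη₂ : ContinuousOn η₂ (Icc 0 1))
    (hy : ContDiff ℝ 3 y)
    (heq : ∀ t ∈ Ioo (0:ℝ) 1,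
      (1 / Real.Gamma (3 - α)) * ∫ s in (0:ℝ)..t, (t - s) ^ (2 - α) * iteratedDeriv 3 y s
        = h t + (1 / Real.Gamma (3 - α)) * ∫ s in (0:ℝ)..t, (t - s) ^ (2 - α) * deriv k s)
    (hbc0 : iteratedDeriv 2 y 0 = 0)
    (hbc1 : y 0 + deriv y 0 = ∫ s in (0:ℝ)..1, η₁ s)
    (hbc2 : y 1 + deriv y 1 = ∫ s in (0:ℝ)..1, η₂ s) :
    ∀ t ∈ Icc (0:ℝ) 1,
      y t = (∫ s in (0:ℝ)..1, greenG α t s * h s)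
        + (∫ s in (0:ℝ)..1, kernelH t s * k s)
        + (2 - t) * (∫ s in (0:ℝ)..1, η₁ s)
        + (t - 1) * (∫ s in (0:ℝ)..1, η₂ s) := by
  intro t ht
  obtain ⟨ht0, ht1⟩ := ht
  have he1 : (-1:ℝ) < 2 - α := by linarith
  have hΓ3α : 0 < Real.Gamma (3-α) := Real.Gamma_pos_of_pos (by linarith)
  have hcont3 : Continuous (iteratedDeriv 3 y) := hy.continuous_iteratedDeriv 3 (by norm_num)
  have hk' : Continuous (deriv k) := hk.continuous_deriv le_rfl
  have hkc : Continuous k := hk.continuous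
  set f : ℝ → ℝ := fun u => iteratedDeriv 3 y u - deriv k u with hfdef
  have hfc : Continuous f := hcont3.sub hk'
  -- Step A: express h via f
  have hA : ∀ s ∈ Ioo (0:ℝ) 1,
      h s = (1/Real.Gamma (3-α)) * ∫ u in (0:ℝ)..s, (s-u)^(2-α) * f u := by
    intro s hs
    have hIy : IntervalIntegrable (fun u => (s-u)^(2-α) * iteratedDeriv 3 y u) volume 0 s :=
      (ker_II he1 s 0 s).mul_continuousOn hcont3.continuousOn
    have hIk : IntervalIntegrable (fun u => (s-u)^(2-α) * deriv k u) volume 0 s :=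
      (ker_II he1 s 0 s).mul_continuousOn hk'.continuousOn
    have heqs := heq s hs
    have hsub : ∫ u in (0:ℝ)..s, (s-u)^(2-α) * f u
        = (∫ u in (0:ℝ)..s, (s-u)^(2-α) * iteratedDeriv 3 y u)
          - ∫ u in (0:ℝ)..s, (s-u)^(2-α) * deriv k u := by
      rw [← intervalIntegral.integral_sub hIy hIk]
      refine intervalIntegral.integral_congr fun x _ => ?_
      simp only [hfdef]
      ring
    rw [hsub, mul_sub]
    linarith [heqs]
  -- G-integral via Fubini
  have hGh : ∫ s in (0:ℝ)..1, greenG α t s * h s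
      = (∫ u in (0:ℝ)..t, (t-u)^2/2 * f u)
        + (1-t) * ∫ u in (0:ℝ)..1, ((1-u)^2/2 + (1-u)) * f u := by
    have e1 : ∫ s in (0:ℝ)..1, greenG α t s * h s
        = ∫ s in Ioo (0:ℝ) 1, greenG α t s * h s := by
      rw [intervalIntegral.integral_of_le (by norm_num : (0:ℝ) ≤ 1),
        integral_Ioc_eq_integral_Ioo]
    have e2 : ∫ s in Ioo (0:ℝ) 1, greenG α t s * h s
        = ∫ s in Ioo (0:ℝ) 1, (1/Real.Gamma (3-α)) *
            (greenG α t s * ∫ u in (0:ℝ)..s, (s-u)^(2-α) * f u) := by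
      refine setIntegral_congr_fun measurableSet_Ioo fun s hs => ?_
      rw [hA s hs]
      ring
    rw [e1, e2, MeasureTheory.integral_const_mul, green_fubini hα1 hα2 ht0 ht1 hfc]
    field_simp
  -- evaluate the two f-integrals by FTC
  have hQ : ∫ u in (0:ℝ)..t, (t-u)^2/2 * f u
      = (y t - y 0 - deriv y 0 * t - iteratedDeriv 2 y 0 * t^2/2)
        - ∫ u in (0:ℝ)..t, (t-u) * k u := by
    have c0 : Continuous fun u : ℝ => (t-u)^2/2 := by fun_prop
    have c1 : Continuous fun u : ℝ => (t-u)^2/2 * iteratedDeriv 3 y u := c0.mul hcont3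
    have c2 : Continuous fun u : ℝ => (t-u)^2/2 * deriv k u := c0.mul hk'
    have e : ∫ u in (0:ℝ)..t, (t-u)^2/2 * f u
        = (∫ u in (0:ℝ)..t, (t-u)^2/2 * iteratedDeriv 3 y u)
          - ∫ u in (0:ℝ)..t, (t-u)^2/2 * deriv k u := by
      rw [← intervalIntegral.integral_sub (c1.intervalIntegrable (μ := volume) 0 t)
        (c2.intervalIntegrable (μ := volume) 0 t)]
      refine intervalIntegral.integral_congr fun x _ => ?_
      simp only [hfdef]
      ring
    rw [e, ftcA hy t, ftcB hk hk0 t]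
  have hP : ∫ u in (0:ℝ)..1, ((1-u)^2/2 + (1-u)) * f u
      = (y 1 + deriv y 1 - (y 0 + 2*deriv y 0 + 3/2 * iteratedDeriv 2 y 0))
        - ∫ u in (0:ℝ)..1, (2-u) * k u := by
    have c0 : Continuous fun u : ℝ => (1-u)^2/2 + (1-u) := by fun_prop
    have c1 : Continuous fun u : ℝ => ((1-u)^2/2 + (1-u)) * iteratedDeriv 3 y u := c0.mul hcont3
    have c2 : Continuous fun u : ℝ => ((1-u)^2/2 + (1-u)) * deriv k u := c0.mul hk'
    have e : ∫ u in (0:ℝ)..1, ((1-u)^2/2 + (1-u)) * f u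
        = (∫ u in (0:ℝ)..1, ((1-u)^2/2 + (1-u)) * iteratedDeriv 3 y u)
          - ∫ u in (0:ℝ)..1, ((1-u)^2/2 + (1-u)) * deriv k u := by
      rw [← intervalIntegral.integral_sub (c1.intervalIntegrable (μ := volume) 0 1)
        (c2.intervalIntegrable (μ := volume) 0 1)]
      refine intervalIntegral.integral_congr fun x _ => ?_
      simp only [hfdef]
      ring
    rw [e, ftcC hy, ftcD hk hk0]
  -- H-integral
  have hH : ∫ s in (0:ℝ)..1, kernelH t s * k s
      = (∫ s in (0:ℝ)..t, (t-s) * k s) + (1-t) * ∫ s in (0:ℝ)..1, (2-s) * k s := by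
    have e1 : ∫ s in (0:ℝ)..1, kernelH t s * k s
        = ∫ s in (0:ℝ)..1, ((max (t-s) 0)^(1:ℝ) * k s + (1-t) * ((2-s) * k s)) := by
      refine intervalIntegral.integral_congr fun s _ => ?_
      rw [kernelH_eq, Real.rpow_one]
      ring
    have cmax : Continuous fun s : ℝ => (max (t-s) 0)^(1:ℝ) * k s :=
      (cont_rpow_comp (by norm_num)
        ((continuous_const.sub continuous_id).max continuous_const)).mul hkc
    have c2 : Continuous fun s : ℝ => (1-t) * ((2-s) * k s) := by fun_prop
    rw [e1, intervalIntegral.integral_add (cmax.intervalIntegrable (μ := volume) 0 1)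
      (c2.intervalIntegrable (μ := volume) 0 1), intervalIntegral.integral_const_mul]
    have m := max_split (g := k) hkc ht1 (by norm_num : (0:ℝ) < 1) (a := 0) ht0
    rw [m]
    have cong : ∫ s in (0:ℝ)..t, (t-s)^(1:ℝ) * k s = ∫ s in (0:ℝ)..t, (t-s) * k s :=
      intervalIntegral.integral_congr fun s _ => by rw [Real.rpow_one]
    rw [cong]
  -- final assembly
  rw [hGh, hH, hQ, hP, ← hbc1, ← hbc2, hbc0]
  ring
end

section
/- Let 2<α<3. For all t, s ∈ [0,1], the Green function G satisfies |G(t,s)| ≤ 3/Γ(α−1). -/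
open MeasureTheory Set intervalIntegral

/-- For `2 < α < 3`, the Green function satisfies `|G(t,s)| ≤ 3/Γ(α−1)` on the unit square. -/
theorem greenG_bound (α : ℝ) (hα1 : 2 < α) (hα2 : α < 3) :
    ∀ t ∈ Icc (0:ℝ) 1, ∀ s ∈ Icc (0:ℝ) 1,
      |greenG α t s| ≤ 3 / Real.Gamma (α - 1) := by
  intro t ht s hs
  obtain ⟨ht0, ht1⟩ := ht
  obtain ⟨hs0, hs1⟩ := hs
  have hΓ1 : 0 < Real.Gamma (α - 1) := Real.Gamma_pos_of_pos (by linarith)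
  have hΓeq : Real.Gamma α = (α - 1) * Real.Gamma (α - 1) := by
    have := Real.Gamma_add_one (ne_of_gt (show (0:ℝ) < α - 1 by linarith))
    simpa using this
  have hΓpos : 0 < Real.Gamma α := by rw [hΓeq]; exact mul_pos (by linarith) hΓ1
  have hΓle : Real.Gamma (α - 1) ≤ Real.Gamma α := by
    rw [hΓeq]; nlinarith
  have hinv : 1 / Real.Gamma α ≤ 1 / Real.Gamma (α - 1) :=
    one_div_le_one_div_of_le hΓ1 hΓle
  have hα1' : (0:ℝ) ≤ α - 1 := by linarith
  have hα2' : (0:ℝ) ≤ α - 2 := by linarith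
  have hB0 : 0 ≤ (1 - s) ^ (α - 1) := Real.rpow_nonneg (by linarith) _
  have hB1 : (1 - s) ^ (α - 1) ≤ 1 :=
    Real.rpow_le_one (by linarith) (by linarith) hα1'
  have hC0 : 0 ≤ (1 - s) ^ (α - 2) := Real.rpow_nonneg (by linarith) _
  have hC1 : (1 - s) ^ (α - 2) ≤ 1 :=
    Real.rpow_le_one (by linarith) (by linarith) hα2'
  have ht1' : 0 ≤ 1 - t := by linarith
  have ht1'' : 1 - t ≤ 1 := by linarith
  have hBm0 : 0 ≤ (1 - t) * (1 - s) ^ (α - 1) := mul_nonneg ht1' hB0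
  have hBm1 : (1 - t) * (1 - s) ^ (α - 1) ≤ 1 := by
    calc (1 - t) * (1 - s) ^ (α - 1) ≤ 1 * 1 := by
          exact mul_le_mul ht1'' hB1 hB0 one_pos.le
      _ = 1 := one_mul 1
  have hCm0 : 0 ≤ (1 - t) * (1 - s) ^ (α - 2) := mul_nonneg ht1' hC0
  have hCm1 : (1 - t) * (1 - s) ^ (α - 2) ≤ 1 := by
    calc (1 - t) * (1 - s) ^ (α - 2) ≤ 1 * 1 := by
          exact mul_le_mul ht1'' hC1 hC0 one_pos.le
      _ = 1 := one_mul 1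
  unfold greenG
  by_cases hst : s ≤ t
  · rw [if_pos hst]
    have hA0 : 0 ≤ (t - s) ^ (α - 1) := Real.rpow_nonneg (by linarith) _
    have hA1 : (t - s) ^ (α - 1) ≤ 1 :=
      Real.rpow_le_one (by linarith) (by linarith) hα1'
    have hnn : 0 ≤ ((t - s) ^ (α - 1) + (1 - t) * (1 - s) ^ (α - 1)) / Real.Gamma α
        + (1 - t) * (1 - s) ^ (α - 2) / Real.Gamma (α - 1) := by positivity
    rw [abs_of_nonneg hnn]
    have h1 : ((t - s) ^ (α - 1) + (1 - t) * (1 - s) ^ (α - 1)) / Real.Gamma α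
        ≤ 2 / Real.Gamma (α - 1) := by
      calc ((t - s) ^ (α - 1) + (1 - t) * (1 - s) ^ (α - 1)) / Real.Gamma α
          ≤ 2 / Real.Gamma α := by
            apply div_le_div_of_nonneg_right _ hΓpos.le; linarith
        _ ≤ 2 / Real.Gamma (α - 1) := by
            apply div_le_div_of_nonneg_left (by norm_num) hΓ1 hΓle
    have h2 : (1 - t) * (1 - s) ^ (α - 2) / Real.Gamma (α - 1)
        ≤ 1 / Real.Gamma (α - 1) :=
      div_le_div_of_nonneg_right hCm1 hΓ1.le
    have h3 : (2:ℝ) / Real.Gamma (α - 1) + 1 / Real.Gamma (α - 1) = 3 / Real.Gamma (α - 1) := by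
      field_simp; ring
    linarith
  · rw [if_neg hst]
    have hnn : 0 ≤ (1 - t) * (1 - s) ^ (α - 1) / Real.Gamma α
        + (1 - t) * (1 - s) ^ (α - 2) / Real.Gamma (α - 1) := by positivity
    rw [abs_of_nonneg hnn]
    have h1 : (1 - t) * (1 - s) ^ (α - 1) / Real.Gamma α ≤ 2 / Real.Gamma (α - 1) := by
      calc (1 - t) * (1 - s) ^ (α - 1) / Real.Gamma α ≤ 1 / Real.Gamma α :=
            div_le_div_of_nonneg_right hBm1 hΓpos.le
        _ ≤ 1 / Real.Gamma (α - 1) := hinv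
        _ ≤ 2 / Real.Gamma (α - 1) := by
            apply div_le_div_of_nonneg_right _ hΓ1.le; norm_num
    have h2 : (1 - t) * (1 - s) ^ (α - 2) / Real.Gamma (α - 1)
        ≤ 1 / Real.Gamma (α - 1) :=
      div_le_div_of_nonneg_right hCm1 hΓ1.le
    have h3 : (2:ℝ) / Real.Gamma (α - 1) + 1 / Real.Gamma (α - 1) = 3 / Real.Gamma (α - 1) := by
      field_simp; ring
    linarith
end

section
/- Let 0<γ<1 and 2<α<3. For 0 ≤ t ≤ s ≤ 1, the Caputo derivative of order γ in the first variable of the Green function G satisfies ᶜDᵞₜG(t,s) = −(t^{1−γ}/Γ(2−γ)) · ((1−s)^{α−1}/Γ(α) + (1−s)^{α−2}/Γ(α−1)). -/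
open MeasureTheory Set intervalIntegral

/-- Caputo fractional derivative of order `γ ∈ (0,1)`. -/
noncomputable def caputo (γ : ℝ) (u : ℝ → ℝ) (t : ℝ) : ℝ :=
  (1 / Real.Gamma (1 - γ)) * ∫ s in (0:ℝ)..t, (t - s) ^ (-γ) * deriv u s

/-- Caputo derivative of order `γ` of the Green function `G` in its first variable. -/
noncomputable def caputoG (α γ t s : ℝ) : ℝ :=
  caputo γ (fun r => greenG α r s) t

lemma deriv_greenG_of_lt (α s x : ℝ) (hx : x < s) :
    deriv (fun r => greenG α r s) x
      = -((1 - s) ^ (α - 1) / Real.Gamma α + (1 - s) ^ (α - 2) / Real.Gamma (α - 1)) := by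
  set K : ℝ := (1 - s) ^ (α - 1) / Real.Gamma α + (1 - s) ^ (α - 2) / Real.Gamma (α - 1) with hK
  have hev : (fun r => greenG α r s) =ᶠ[nhds x] (fun r : ℝ => (1 - r) * K) := by
    filter_upwards [Iio_mem_nhds hx] with y hy
    rw [Set.mem_Iio] at hy
    simp only [greenG, if_neg (not_le.mpr hy), hK]
    ring
  rw [hev.deriv_eq]
  have h : HasDerivAt (fun r : ℝ => (1 - r) * K) (-1 * K) x :=
    ((hasDerivAt_id x).const_sub 1).mul_const K
  rw [h.deriv]; ring

/-- For `0 < γ < 1`, `2 < α < 3` and `0 ≤ t ≤ s ≤ 1`, the Caputo derivative of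
order `γ` of `G` in its first variable is
`−(t^{1−γ}/Γ(2−γ)) ((1−s)^{α−1}/Γ(α) + (1−s)^{α−2}/Γ(α−1))`. -/
theorem caputoG_eq_of_le (γ α : ℝ) (hγ1 : 0 < γ) (hγ2 : γ < 1)
    (hα1 : 2 < α) (hα2 : α < 3) :
    ∀ t s : ℝ, 0 ≤ t → t ≤ s → s ≤ 1 →
      caputoG α γ t s
        = -(t ^ (1 - γ) / Real.Gamma (2 - γ)) *
            ((1 - s) ^ (α - 1) / Real.Gamma α
              + (1 - s) ^ (α - 2) / Real.Gamma (α - 1)) := by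
  intro t s ht0 hts hs1
  set K : ℝ := (1 - s) ^ (α - 1) / Real.Gamma α + (1 - s) ^ (α - 2) / Real.Gamma (α - 1) with hK
  unfold caputoG caputo
  have hne : ∀ᵐ x : ℝ, x ≠ s := by
    rw [MeasureTheory.ae_iff]
    simpa using Real.volume_singleton (x := s)
  have hcong :
      (∫ r in (0:ℝ)..t, (t - r) ^ (-γ) * deriv (fun r => greenG α r s) r)
        = ∫ r in (0:ℝ)..t, (t - r) ^ (-γ) * (-K) := by
    refine intervalIntegral.integral_congr_ae ?_
    filter_upwards [hne] with x hxs hxI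
    rw [Set.uIoc_of_le ht0] at hxI
    have hxlt : x < s := lt_of_le_of_ne (hxI.2.trans hts) hxs
    rw [deriv_greenG_of_lt α s x hxlt]
  rw [hcong, intervalIntegral.integral_mul_const]
  have hint : (∫ r in (0:ℝ)..t, (t - r) ^ (-γ)) = t ^ (1 - γ) / (1 - γ) := by
    rw [intervalIntegral.integral_comp_sub_left (fun x : ℝ => x ^ (-γ)) t]
    simp only [sub_zero, sub_self]
    rw [integral_rpow (Or.inl (by linarith))]
    rw [Real.zero_rpow (by linarith), show -γ + 1 = 1 - γ by ring]
    norm_num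
  rw [hint]
  have hG2 : Real.Gamma (2 - γ) = (1 - γ) * Real.Gamma (1 - γ) := by
    have := Real.Gamma_add_one (s := 1 - γ) (ne_of_gt (by linarith))
    rw [show (1 : ℝ) - γ + 1 = 2 - γ by ring] at this
    rw [this]
  have hΓpos : 0 < Real.Gamma (1 - γ) := Real.Gamma_pos_of_pos (by linarith)
  rw [hG2]
  field_simp
end
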